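/- arXiv:2411.11209 — 3 statements merged into one kernel-verified Lean document; each statement's English description precedes it below -/
import Mathlib

section
/- Let b > 0, c ∈ ℝ and define ψ(x) = (b x³ + (1 - 4b) x + c)/(4 - 3x²). If x* satisfies |x*| > 2/√3 and ψ(x*) = 0, then ψ'(x*) < 0; that is, every equilibrium lying on the outer branches C₀L ∪ C₀R of the critical manifold attracts the slow flow when b > 0. -/
/-- for `b > 0` and `ψ(x) = (b x³ + (1 - 4b) x + c)/(4 - 3x²)`,
every zero `x*` of `ψ` with `|x*| > 2/√3` (i.e. on the outer branches of the
critical manifold) satisfies `ψ'(x*) < 0`, so it attracts the slow flow. -/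
theorem fhn_outer_equilibria_attract_slow_flow (b c xs : ℝ)
    (hb : 0 < b)
    (hx : |xs| > 2/Real.sqrt 3)
    (hzero : (b*xs^3 + (1 - 4*b)*xs + c) / (4 - 3*xs^2) = 0) :
    deriv (fun x => (b*x^3 + (1 - 4*b)*x + c) / (4 - 3*x^2)) xs < 0 := by
  have h3 : (0:ℝ) < Real.sqrt 3 := Real.sqrt_pos.mpr (by norm_num)
  have hs3 : Real.sqrt 3 ^ 2 = 3 := Real.sq_sqrt (by norm_num)
  have habs : |xs| ≥ 0 := abs_nonneg xs
  have hsq : xs ^ 2 = |xs| ^ 2 := (sq_abs xs).symm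
  have hx2 : xs ^ 2 > 4/3 := by
    have h1 : |xs| ^ 2 > (2/Real.sqrt 3) ^ 2 := by
      have : (0:ℝ) ≤ 2/Real.sqrt 3 := by positivity
      nlinarith
    rw [hsq]
    have h2 : (2/Real.sqrt 3) ^ 2 = 4/3 := by
      rw [div_pow, hs3]; norm_num
    linarith [h1, h2.symm.le]
  have hD : 4 - 3*xs^2 < 0 := by nlinarith
  have hDne : 4 - 3*xs^2 ≠ 0 := ne_of_lt hD
  have hN : b*xs^3 + (1 - 4*b)*xs + c = 0 := by
    field_simp at hzero
    rcases div_eq_zero_iff.mp hzero with h | h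
    · linarith [h]
    · exact absurd (by linarith [h]) hDne
  have h1 : HasDerivAt (fun x : ℝ => b*x^3 + (1 - 4*b)*x + c)
      (3*b*xs^2 + (1 - 4*b)) xs := by
    have := (((hasDerivAt_pow 3 xs).const_mul b).add
      ((hasDerivAt_id xs).const_mul (1 - 4*b))).add_const c
    refine this.congr_deriv ?_
    norm_num
    ring
  have h2 : HasDerivAt (fun x : ℝ => 4 - 3*x^2) (-(6*xs)) xs := by
    have := ((hasDerivAt_pow 2 xs).const_mul 3).const_sub 4
    refine this.congr_deriv ?_
    norm_num
    ring
  have hderiv := (h1.div h2 hDne).deriv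
  rw [show (fun x => (b*x^3 + (1 - 4*b)*x + c) / (4 - 3*x^2)) = ((fun x : ℝ => b*x^3 + (1 - 4*b)*x + c) / fun x => 4 - 3*x^2) from rfl, hderiv, hN]
  have hN' : 3*b*xs^2 + (1 - 4*b) > 0 := by nlinarith
  apply div_neg_of_neg_of_pos
  · nlinarith
  · positivity
end

section
/- Let T > 0 and let x : [0, T] → ℝ be continuous, differentiable on (0, T), with 2/√3 ≤ x(τ) ≤ 4/√3 for all τ, x(0) = 4/√3, x(T) = 2/√3, and x'(τ) (4 - 3 x(τ)²) = x(τ) for all τ ∈ (0, T). Then T = 6 - 4 log 2. -/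
/-- if `x : [0,T] → ℝ` is continuous, differentiable on `(0,T)`,
takes values in `[2/√3, 4/√3]`, goes from `4/√3` to `2/√3`, and satisfies the
slow-flow equation `x'(τ)(4 - 3x(τ)²) = x(τ)` on `(0,T)`, then
`T = 6 - 4 log 2`. -/
theorem fhn_time_on_right_branch (T : ℝ) (hT : 0 < T) (x : ℝ → ℝ)
    (hcont : ContinuousOn x (Set.Icc 0 T))
    (hdiff : ∀ τ ∈ Set.Ioo 0 T, DifferentiableAt ℝ x τ)
    (hlb : ∀ τ ∈ Set.Icc 0 T, 2/Real.sqrt 3 ≤ x τ)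
    (hub : ∀ τ ∈ Set.Icc 0 T, x τ ≤ 4/Real.sqrt 3)
    (h0 : x 0 = 4/Real.sqrt 3)
    (hT' : x T = 2/Real.sqrt 3)
    (hode : ∀ τ ∈ Set.Ioo 0 T, deriv x τ * (4 - 3*(x τ)^2) = x τ) :
    T = 6 - 4 * Real.log 2 := by
  have hs3 : (0:ℝ) < Real.sqrt 3 := Real.sqrt_pos.mpr (by norm_num)
  have hxpos : ∀ τ ∈ Set.Icc 0 T, 0 < x τ := fun τ hτ =>
    lt_of_lt_of_le (by positivity) (hlb τ hτ)
  set g : ℝ → ℝ := fun τ => 4 * Real.log (x τ) - 3/2 * (x τ)^2 - τ with hg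
  have hgcont : ContinuousOn g (Set.Icc 0 T) := by
    apply ContinuousOn.sub
    apply ContinuousOn.sub
    · exact ContinuousOn.mul continuousOn_const
        (Real.continuousOn_log.comp hcont (fun τ hτ => ne_of_gt (hxpos τ hτ)))
    · exact ContinuousOn.mul continuousOn_const (hcont.pow 2)
    · exact continuousOn_id
  have hgderiv : ∀ τ ∈ Set.Ioo 0 T, HasDerivAt g 0 τ := by
    intro τ hτ
    have hmem : τ ∈ Set.Icc 0 T := Set.Ioo_subset_Icc_self hτ
    have hxne : x τ ≠ 0 := ne_of_gt (hxpos τ hmem)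
    have hx : HasDerivAt x (deriv x τ) τ := (hdiff τ hτ).hasDerivAt
    have h1 : HasDerivAt (fun t => Real.log (x t)) (deriv x τ / x τ) τ :=
      hx.log hxne
    have h2 : HasDerivAt (fun t => (x t)^2) (2 * x τ ^ 1 * deriv x τ) τ := by
      simpa using hx.fun_pow 2
    have h3 : HasDerivAt (fun t : ℝ => t) 1 τ := hasDerivAt_id τ
    have h := ((h1.const_mul 4).sub (h2.const_mul (3/2))).sub h3
    have hkey : 4 * (deriv x τ / x τ) - 3/2 * (2 * x τ ^ 1 * deriv x τ) - 1 = 0 := by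
      have ho := hode τ hτ
      field_simp
      nlinarith [ho]
    rw [hkey] at h
    exact h
  obtain ⟨c, hc, hslope⟩ := exists_hasDerivAt_eq_slope g (fun _ => 0) hT hgcont hgderiv
  have hgeq : g T = g 0 := by
    have := hslope.symm
    field_simp at this
    rcases div_eq_zero_iff.mp this with h | h <;> linarith
  have hlog : Real.log (4 / Real.sqrt 3) = Real.log 2 + Real.log (2 / Real.sqrt 3) := by
    rw [← Real.log_mul (by norm_num) (by positivity)]
    ring_nf
  have hsq : Real.sqrt 3 ^ 2 = 3 := Real.sq_sqrt (by norm_num)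
  have e1 : (2 / Real.sqrt 3)^2 = 4/3 := by
    rw [div_pow, hsq]; norm_num
  have e2 : (4 / Real.sqrt 3)^2 = 16/3 := by
    rw [div_pow, hsq]; norm_num
  simp only [hg, h0, hT', e1, e2, hlog] at hgeq
  linarith [hgeq]
end

section
/- Consider the FitzHugh–Nagumo system with c = 0, f(x, y) = -y + 4x - x³ and g_b(x, y) = x - b y, parametrized by b. At the parameter value b = 3/8 the equilibrium E₊ = (x₊, x₊/b) with x₊ = √(4 - 1/b) equals the fold point (2/√3, 16/(3√3)), and it is a regular singular fold: f(E₊) = 0, ∂f/∂x(E₊) = 0, ∂²f/∂x²(E₊) = -4√3 ≠ 0, ∂f/∂y(E₊) = -1 ≠ 0, g_b(E₊) = 0 at b = 3/8, ∂g_b/∂x(E₊) = 1 ≠ 0, and ∂g_b/∂b(E₊) = -16/(3√3) ≠ 0. -/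
/-- The FitzHugh–Nagumo fast equation `f(x,y) = -y + 4x - x³`. -/
noncomputable def fhnF (x y : ℝ) : ℝ := -y + 4*x - x^3

/-- The slow equation of the FitzHugh–Nagumo system with `c = 0`,
parametrized by `b`: `g_b(x,y) = x - b y`. -/
noncomputable def fhnGb (b x y : ℝ) : ℝ := x - b*y

lemma fhnF_deriv_x (y : ℝ) : deriv (fun x => fhnF x y) = fun x => 4 - 3*x^2 := by
  funext x
  have : (fun x => fhnF x y) = fun x => -y + 4*x - x^3 := rfl
  rw [this]
  have h1 : HasDerivAt (fun x : ℝ => -y + 4*x - x^3) (0 + 4*1 - 3*x^2) x := by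
    exact (((hasDerivAt_const x (-y)).add ((hasDerivAt_id x).const_mul 4)).sub
      (hasDerivAt_pow 3 x)).congr_deriv (by norm_num)
  simpa using h1.deriv

lemma fhnF_deriv2_x (y x : ℝ) : deriv (deriv (fun x => fhnF x y)) x = -(6*x) := by
  rw [fhnF_deriv_x]
  have h1 : HasDerivAt (fun x : ℝ => 4 - 3*x^2) (0 - 3*(2*x)) x := by
    exact ((hasDerivAt_const x (4:ℝ)).sub ((hasDerivAt_pow 2 x).const_mul 3)).congr_deriv (by norm_num)
  rw [h1.deriv]; ring

lemma fhnF_deriv_y (x y : ℝ) : deriv (fun y => fhnF x y) y = -1 := by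
  have : (fun y => fhnF x y) = fun y => -y + (4*x - x^3) := by
    funext y; simp [fhnF]; ring
  rw [this]
  have h1 : HasDerivAt (fun y : ℝ => -y + (4*x - x^3)) (-1 + 0) y := by
    exact ((hasDerivAt_id y).neg.add (hasDerivAt_const y (4*x - x^3))).congr_deriv (by norm_num)
  simpa using h1.deriv

lemma fhnGb_deriv_x (b y x : ℝ) : deriv (fun x => fhnGb b x y) x = 1 := by
  have : (fun x => fhnGb b x y) = fun x => x - b*y := rfl
  rw [this]
  have h1 : HasDerivAt (fun x : ℝ => x - b*y) (1 - 0) x := by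
    exact ((hasDerivAt_id x).sub (hasDerivAt_const x (b*y))).congr_deriv (by norm_num)
  simpa using h1.deriv

lemma fhnGb_deriv_b (x y b : ℝ) : deriv (fun b => fhnGb b x y) b = -y := by
  have : (fun b => fhnGb b x y) = fun b => x - b*y := rfl
  rw [this]
  have h1 : HasDerivAt (fun b : ℝ => x - b*y) (0 - 1*y) b := by
    exact ((hasDerivAt_const b x).sub ((hasDerivAt_id b).mul_const y)).congr_deriv (by norm_num)
  rw [h1.deriv]; ring

/-- at the parameter value `b = 3/8`, the equilibrium
`E₊ = (x₊, x₊/b)` with `x₊ = √(4 - 1/b)` equals the fold point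
`(2/√3, 16/(3√3))` and is a regular singular fold of the FitzHugh–Nagumo
system with `c = 0`. -/
theorem fhn_c0_regular_singular_fold :
    let b₀ : ℝ := 3/8
    let xp : ℝ := Real.sqrt (4 - 1/b₀)
    let Ep : ℝ × ℝ := (xp, xp/b₀)
    Ep = (2/Real.sqrt 3, 16/(3*Real.sqrt 3)) ∧
    fhnF Ep.1 Ep.2 = 0 ∧
    deriv (fun x => fhnF x Ep.2) Ep.1 = 0 ∧
    deriv (deriv (fun x => fhnF x Ep.2)) Ep.1 = -(4*Real.sqrt 3) ∧
    deriv (deriv (fun x => fhnF x Ep.2)) Ep.1 ≠ 0 ∧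
    deriv (fun y => fhnF Ep.1 y) Ep.2 = -1 ∧
    deriv (fun y => fhnF Ep.1 y) Ep.2 ≠ 0 ∧
    fhnGb b₀ Ep.1 Ep.2 = 0 ∧
    deriv (fun x => fhnGb b₀ x Ep.2) Ep.1 = 1 ∧
    deriv (fun x => fhnGb b₀ x Ep.2) Ep.1 ≠ 0 ∧
    deriv (fun b => fhnGb b Ep.1 Ep.2) b₀ = -(16/(3*Real.sqrt 3)) ∧
    deriv (fun b => fhnGb b Ep.1 Ep.2) b₀ ≠ 0 := by
  intro b₀ xp Ep
  set s : ℝ := Real.sqrt 3 with hs_def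
  have hs0 : (0:ℝ) < s := Real.sqrt_pos.mpr (by norm_num)
  have hs2 : s^2 = 3 := Real.sq_sqrt (by norm_num)
  have hsne : s ≠ 0 := ne_of_gt hs0
  have hxp : xp = 2/s := by
    show Real.sqrt (4 - 1/b₀) = 2/s
    have : (4 - 1/b₀ : ℝ) = (2/s)^2 := by
      show (4 - 1/(3/8) : ℝ) = (2/s)^2
      field_simp
      nlinarith [hs2]
    rw [this, Real.sqrt_sq (by positivity)]
  have hEp1 : Ep.1 = 2/s := hxp
  have hEp2 : Ep.2 = 16/(3*s) := by
    show xp/b₀ = 16/(3*s)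
    rw [hxp]; show (2/s)/(3/8) = 16/(3*s); field_simp; ring
  have hEpeq : Ep = (2/s, 16/(3*s)) := Prod.ext hEp1 hEp2
  refine ⟨hEpeq, ?_, ?_, ?_, ?_, ?_, ?_, ?_, ?_, ?_, ?_, ?_⟩
  · rw [hEp1, hEp2]; unfold fhnF; field_simp; nlinarith [hs2]
  · rw [fhnF_deriv_x, hEp1]; field_simp; nlinarith [hs2]
  · rw [fhnF_deriv2_x, hEp1]; field_simp; nlinarith [hs2]
  · rw [fhnF_deriv2_x, hEp1]
    have : (6 : ℝ) * (2/s) ≠ 0 := by positivity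
    simpa using this
  · exact fhnF_deriv_y _ _
  · rw [fhnF_deriv_y]; norm_num
  · rw [hEp1, hEp2]; unfold fhnGb; show 2/s - (3/8)*(16/(3*s)) = 0; field_simp; ring
  · exact fhnGb_deriv_x _ _ _
  · rw [fhnGb_deriv_x]; norm_num
  · rw [fhnGb_deriv_b, hEp2]
  · rw [fhnGb_deriv_b, hEp2]
    have : (16 : ℝ)/(3*s) ≠ 0 := by positivity
    simpa using this
end
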